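/- Let L1 = ([a_1,b_1],...,[a_m,b_m]) and L2 = ([c_1,d_1],...,[c_n,d_n]) be two sequences of intervals of nonnegative integers with a_1 ≥ ... ≥ a_m and c_1 ≥ ... ≥ c_n. Then (L1;L2) is bigraphic (i.e., there exists a bipartite graph G with parts X = {x_1,...,x_m}, Y = {y_1,...,y_n} satisfying a_i ≤ deg(x_i) ≤ b_i and c_j ≤ deg(y_j) ≤ d_j) if and only if for each t with 1 ≤ t ≤ n, Σ_{i=1}^t c_i ≤ Σ_{j=1}^m min{b_j, t}, and for each s with 1 ≤ s ≤ m, Σ_{i=1}^s a_i ≤ Σ_{j=1}^n min{d_j, s}. -/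

import Mathlib

open Finset

/-- `Bigraphic p q`: there is a simple bipartite graph with parts of sizes `m` and `n`
whose degree sequences on the two parts are `p` and `q`, encoded via a 0/1
biadjacency matrix. -/
def Bigraphic {m n : ℕ} (p : Fin m → ℕ) (q : Fin n → ℕ) : Prop :=
  ∃ M : Fin m → Fin n → Bool,
    (∀ i, (∑ j, if M i j then 1 else 0) = p i) ∧
    (∀ j, (∑ i, if M i j then 1 else 0) = q j)

/-- IntervalBigraphic a b c d : there is a simple bipartite graph whose degree of the
i-th vertex in the first part lies in [a i, b i] and of the j-th vertex in the
second part lies in [c j, d j]. -/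
def IntervalBigraphic {m n : ℕ} (a b : Fin m → ℕ) (c d : Fin n → ℕ) : Prop :=
  ∃ M : Fin m → Fin n → Bool,
    (∀ i, a i ≤ (∑ j, if M i j then 1 else 0) ∧ (∑ j, if M i j then 1 else 0) ≤ b i) ∧
    (∀ j, c j ≤ (∑ i, if M i j then 1 else 0) ∧ (∑ i, if M i j then 1 else 0) ≤ d j)

namespace TGG
variable {m n : ℕ}

def rs (M : Fin m → Fin n → Bool) (i : Fin m) : ℕ := ∑ j, if M i j then 1 else 0
def cs (M : Fin m → Fin n → Bool) (j : Fin n) : ℕ := ∑ i, if M i j then 1 else 0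

def upd (M : Fin m → Fin n → Bool) (i : Fin m) (j : Fin n) (v : Bool) :
    Fin m → Fin n → Bool := fun p q => if p = i ∧ q = j then v else M p q

def Fv (a : Fin m → ℕ) (c : Fin n → ℕ) (M : Fin m → Fin n → Bool) : ℕ :=
  ∑ i, min (rs M i) (a i) + ∑ j, min (cs M j) (c j)

lemma rs_upd_true {M : Fin m → Fin n → Bool} {i : Fin m} {j : Fin n}
    (h : M i j = false) (p : Fin m) :
    rs (upd M i j true) p = rs M p + (if p = i then 1 else 0) := by
  unfold rs upd
  rcases eq_or_ne p i with rfl | hp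
  · simp only [if_pos rfl, true_and]
    have : ∀ q : Fin n, (if (if q = j then true else M p q) then 1 else 0) =
        (if M p q then (1:ℕ) else 0) + (if q = j then 1 else 0) := by
      intro q
      rcases eq_or_ne q j with rfl | hq
      · simp [h]
      · simp [hq]
    rw [Finset.sum_congr rfl fun q _ => this q, Finset.sum_add_distrib]
    simp
  · simp [hp]

lemma rs_upd_false {M : Fin m → Fin n → Bool} {i : Fin m} {j : Fin n}
    (h : M i j = true) (p : Fin m) :
    rs M p = rs (upd M i j false) p + (if p = i then 1 else 0) := by
  unfold rs upd
  rcases eq_or_ne p i with rfl | hp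
  · simp only [if_pos rfl, true_and]
    have : ∀ q : Fin n, (if M p q then (1:ℕ) else 0) =
        (if (if q = j then false else M p q) then (1:ℕ) else 0) + (if q = j then 1 else 0) := by
      intro q
      rcases eq_or_ne q j with rfl | hq
      · simp [h]
      · simp [hq]
    rw [Finset.sum_congr rfl fun q _ => this q, Finset.sum_add_distrib]
    simp
  · simp [hp]

lemma cs_upd_true {M : Fin m → Fin n → Bool} {i : Fin m} {j : Fin n}
    (h : M i j = false) (q : Fin n) :
    cs (upd M i j true) q = cs M q + (if q = j then 1 else 0) := by
  unfold cs upd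
  rcases eq_or_ne q j with rfl | hq
  · simp only [if_pos rfl, and_true]
    have : ∀ p : Fin m, (if (if p = i then true else M p q) then 1 else 0) =
        (if M p q then (1:ℕ) else 0) + (if p = i then 1 else 0) := by
      intro p
      rcases eq_or_ne p i with rfl | hp
      · simp [h]
      · simp [hp]
    rw [Finset.sum_congr rfl fun p _ => this p, Finset.sum_add_distrib]
    simp
  · simp [hq]

lemma cs_upd_false {M : Fin m → Fin n → Bool} {i : Fin m} {j : Fin n}
    (h : M i j = true) (q : Fin n) :
    cs M q = cs (upd M i j false) q + (if q = j then 1 else 0) := by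
  unfold cs upd
  rcases eq_or_ne q j with rfl | hq
  · simp only [if_pos rfl, and_true]
    have : ∀ p : Fin m, (if M p q then (1:ℕ) else 0) =
        (if (if p = i then false else M p q) then (1:ℕ) else 0) + (if p = i then 1 else 0) := by
      intro p
      rcases eq_or_ne p i with rfl | hp
      · simp [h]
      · simp [hp]
    rw [Finset.sum_congr rfl fun p _ => this p, Finset.sum_add_distrib]
    simp
  · simp [hq]


inductive St (M0 : Fin m → Fin n → Bool) (i0 : Fin m) :
    (Fin m → Fin n → Bool) → (Fin m ⊕ Fin n) → Prop where
  | base : St M0 i0 M0 (Sum.inl i0)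
  | add {M : Fin m → Fin n → Bool} {i : Fin m} {j : Fin n} :
      St M0 i0 M (Sum.inl i) → M i j = false → St M0 i0 (upd M i j true) (Sum.inr j)
  | rem {M : Fin m → Fin n → Bool} {i : Fin m} {j : Fin n} :
      St M0 i0 M (Sum.inr j) → M i j = true → St M0 i0 (upd M i j false) (Sum.inl i)

lemma St.sums {M0 : Fin m → Fin n → Bool} {i0 : Fin m} {M x}
    (h : St M0 i0 M x) :
    (∀ p, rs M p + (if Sum.inl p = x then 1 else 0) = rs M0 p + (if p = i0 then 1 else 0)) ∧
    (∀ q, cs M q = cs M0 q + (if Sum.inr q = x then 1 else 0)) := by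
  induction h with
  | base => constructor <;> intro y <;> simp [Sum.inl.injEq]
  | @add M i j hst hij ih =>
      obtain ⟨ihr, ihc⟩ := ih
      constructor
      · intro p
        rw [rs_upd_true hij p]
        have := ihr p
        simp only [Sum.inl.injEq, Sum.inr.injEq, reduceCtorEq, if_false] at this ⊢
        omega
      · intro q
        rw [cs_upd_true hij q]
        have := ihc q
        simp only [Sum.inl.injEq, Sum.inr.injEq, reduceCtorEq, if_false] at this ⊢
        omega
  | @rem M i j hst hij ih =>
      obtain ⟨ihr, ihc⟩ := ih
      constructor
      · intro p
        have h1 := rs_upd_false hij p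
        have := ihr p
        simp only [Sum.inl.injEq, Sum.inr.injEq, reduceCtorEq, if_false] at this ⊢
        omega
      · intro q
        have h1 := cs_upd_false hij q
        have := ihc q
        simp only [Sum.inl.injEq, Sum.inr.injEq, reduceCtorEq, if_false] at this ⊢
        omega

lemma St.mem {M0 : Fin m → Fin n → Bool} {i0 : Fin m} {M x}
    (h : St M0 i0 M x) :
    ∀ p q, M p q ≠ M0 p q →
      (∃ M', St M0 i0 M' (Sum.inl p)) ∧ (∃ M', St M0 i0 M' (Sum.inr q)) := by
  induction h with
  | base => intro p q hpq; exact absurd rfl hpq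
  | @add M i j hst hij ih =>
      intro p q hpq
      by_cases hc : p = i ∧ q = j
      · obtain ⟨rfl, rfl⟩ := hc
        exact ⟨⟨M, hst⟩, ⟨upd M p q true, St.add hst hij⟩⟩
      · apply ih
        simpa [upd, hc] using hpq
  | @rem M i j hst hij ih =>
      intro p q hpq
      by_cases hc : p = i ∧ q = j
      · obtain ⟨rfl, rfl⟩ := hc
        exact ⟨⟨upd M p q false, St.rem hst hij⟩, ⟨M, hst⟩⟩
      · apply ih
        simpa [upd, hc] using hpq


lemma key (a b : Fin m → ℕ) (c d : Fin n → ℕ) (M0 : Fin m → Fin n → Bool) (i0 : Fin m)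
    (hfb : ∀ i, rs M0 i ≤ b i) (hfd : ∀ j, cs M0 j ≤ d j)
    (hmax : ∀ M, (∀ i, rs M i ≤ b i) → (∀ j, cs M j ≤ d j) → Fv a c M ≤ Fv a c M0)
    (hdef : rs M0 i0 < a i0) (hab : a i0 ≤ b i0) :
    ∃ S : Finset (Fin m), ∑ j, min (d j) S.card < ∑ i ∈ S, a i := by
  classical
  -- Claim B : every reachable column is saturated
  have claimB : ∀ (j : Fin n) (M), St M0 i0 M (Sum.inr j) → cs M0 j = d j := by
    intro j M h
    by_contra hne
    have hlt : cs M0 j < d j := lt_of_le_of_ne (hfd j) hne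
    obtain ⟨hr, hc⟩ := h.sums
    have hr' : ∀ p, rs M p = rs M0 p + (if p = i0 then 1 else 0) := by
      intro p; have := hr p
      simpa using this
    have hc' : ∀ q, cs M q = cs M0 q + (if q = j then 1 else 0) := by
      intro q; have := hc q
      simpa using this
    have hfb' : ∀ p, rs M p ≤ b p := by
      intro p; rw [hr' p]
      rcases eq_or_ne p i0 with rfl | hp
      · simp only [if_pos rfl, if_true, reduceIte]; omega
      · simp [hp, hfb p]
    have hfd' : ∀ q, cs M q ≤ d q := by
      intro q; rw [hc' q]
      rcases eq_or_ne q j with rfl | hq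
      · simp only [if_pos rfl, if_true, reduceIte]; omega
      · simp [hq, hfd q]
    have hFrow : ∑ i, min (rs M i) (a i) = ∑ i, min (rs M0 i) (a i) + 1 := by
      have : ∀ p : Fin m, min (rs M p) (a p)
          = min (rs M0 p) (a p) + (if p = i0 then 1 else 0) := by
        intro p; rw [hr' p]
        rcases eq_or_ne p i0 with rfl | hp
        · simp only [if_pos rfl, if_true, reduceIte]; omega
        · simp [hp]
      rw [Finset.sum_congr rfl fun p _ => this p, Finset.sum_add_distrib]
      simp
    have hFcol : ∑ q, min (cs M0 q) (c q) ≤ ∑ q, min (cs M q) (c q) := by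
      apply Finset.sum_le_sum
      intro q _
      rw [hc' q]
      exact min_le_min (Nat.le_add_right _ _) le_rfl
    have hgt : Fv a c M0 < Fv a c M := by
      unfold Fv; omega
    exact absurd (hmax M hfb' hfd') (not_le.mpr hgt)
  -- Claim A : every reachable row other than i0 has rowsum ≤ a
  have claimA : ∀ (i : Fin m) (M), St M0 i0 M (Sum.inl i) → i ≠ i0 → rs M0 i ≤ a i := by
    intro i M h hne
    by_contra hgt'
    have hgt : a i < rs M0 i := not_le.mp hgt'
    obtain ⟨hr, hc⟩ := h.sums
    have hr' : ∀ p, rs M p + (if p = i then 1 else 0)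
        = rs M0 p + (if p = i0 then 1 else 0) := by
      intro p; have := hr p; simpa using this
    have hc' : ∀ q, cs M q = cs M0 q := by
      intro q; have := hc q; simpa using this
    have hfb' : ∀ p, rs M p ≤ b p := by
      intro p; have := hr' p
      rcases eq_or_ne p i0 with rfl | hp0
      · simp only [if_pos rfl, if_true, reduceIte, if_neg (Ne.symm hne)] at this; omega
      · rcases eq_or_ne p i with rfl | hpi
        · simp only [if_pos rfl, if_true, reduceIte, if_neg hp0] at this
          have := hfb p; omega
        · simp only [if_true, reduceIte, if_neg hpi, if_neg hp0] at this
          have := hfb p; omega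
    have hfd' : ∀ q, cs M q ≤ d q := fun q => (hc' q) ▸ hfd q
    have hFrow : ∑ p, min (rs M p) (a p) = ∑ p, min (rs M0 p) (a p) + 1 := by
      have : ∀ p : Fin m, min (rs M p) (a p)
          = min (rs M0 p) (a p) + (if p = i0 then 1 else 0) := by
        intro p; have := hr' p
        rcases eq_or_ne p i0 with rfl | hp0
        · simp only [if_pos rfl, if_true, reduceIte, if_neg (Ne.symm hne)] at this ⊢; omega
        · rcases eq_or_ne p i with rfl | hpi
          · simp only [if_pos rfl, if_true, reduceIte, if_neg hp0] at this
            simp only [if_true, reduceIte, if_neg hp0]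
            omega
          · simp only [if_true, reduceIte, if_neg hpi, if_neg hp0] at this ⊢
            omega
      rw [Finset.sum_congr rfl fun p _ => this p, Finset.sum_add_distrib]
      simp
    have hFcol : ∑ q, min (cs M q) (c q) = ∑ q, min (cs M0 q) (c q) := by
      exact Finset.sum_congr rfl fun q _ => by rw [hc' q]
    have hgt2 : Fv a c M0 < Fv a c M := by unfold Fv; omega
    exact absurd (hmax M hfb' hfd') (not_le.mpr hgt2)
  -- the cut set
  set S : Finset (Fin m) :=
    univ.filter (fun i => ∃ M, St M0 i0 M (Sum.inl i)) with hS
  have hi0S : i0 ∈ S := by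
    rw [hS]; exact mem_filter.mpr ⟨mem_univ _, ⟨M0, St.base⟩⟩
  have hcut : ∀ j : Fin n, min (d j) S.card ≤ ∑ i ∈ S, (if M0 i j then 1 else 0) := by
    intro j
    by_cases hB : ∃ M, St M0 i0 M (Sum.inr j)
    · obtain ⟨M, hM⟩ := hB
      have hdj : cs M0 j = d j := claimB j M hM
      have hsub : ∀ i : Fin m, M0 i j = true → i ∈ S := by
        intro i hij
        rw [hS]; refine mem_filter.mpr ⟨mem_univ _, ?_⟩
        by_cases hMij : M i j = true
        · exact ⟨upd M i j false, St.rem hM hMij⟩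
        · exact (hM.mem i j (by rw [hij, Bool.eq_false_iff.mpr hMij]; simp)).1
      have hsum : ∑ i ∈ S, (if M0 i j then (1:ℕ) else 0) = cs M0 j := by
        unfold cs
        refine Finset.sum_subset (subset_univ S) ?_
        intro i _ hiS
        by_contra h0
        have : M0 i j = true := by
          by_contra h1
          simp [Bool.eq_false_iff.mpr h1] at h0
        exact hiS (hsub i this)
      rw [hsum, hdj]
      exact min_le_left _ _
    · have hall : ∀ i ∈ S, M0 i j = true := by
        intro i hiS
        obtain ⟨M, hM⟩ := (mem_filter.mp (hS ▸ hiS)).2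
        by_cases hMij : M i j = true
        · by_contra h0
          exact hB ((hM.mem i j (by simp [hMij, Bool.eq_false_iff.mpr h0])).2)
        · exact absurd ⟨_, St.add hM (Bool.eq_false_iff.mpr hMij)⟩ hB
      have hsum : ∑ i ∈ S, (if M0 i j then (1:ℕ) else 0) = S.card := by
        rw [Finset.sum_congr rfl fun i hi => if_pos (hall i hi)]
        simp
      rw [hsum]
      exact min_le_right _ _
  refine ⟨S, ?_⟩
  have h1 : ∑ j, min (d j) S.card ≤ ∑ j, ∑ i ∈ S, (if M0 i j then (1:ℕ) else 0) :=
    Finset.sum_le_sum fun j _ => hcut j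
  have h2 : ∑ j, ∑ i ∈ S, (if M0 i j then (1:ℕ) else 0) = ∑ i ∈ S, rs M0 i := by
    rw [Finset.sum_comm]; rfl
  have h3 : ∑ i ∈ S, rs M0 i < ∑ i ∈ S, a i := by
    apply Finset.sum_lt_sum
    · intro i hiS
      obtain ⟨M, hM⟩ := (mem_filter.mp (hS ▸ hiS)).2
      rcases eq_or_ne i i0 with rfl | hne
      · exact le_of_lt hdef
      · exact claimA i M hM hne
    · exact ⟨i0, hi0S, hdef⟩
  omega


lemma rs_transpose (M : Fin m → Fin n → Bool) (j : Fin n) :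
    rs (fun q p => M p q) j = cs M j := rfl

lemma cs_transpose (M : Fin m → Fin n → Bool) (i : Fin m) :
    cs (fun q p => M p q) i = rs M i := rfl

lemma Fv_transpose (a : Fin m → ℕ) (c : Fin n → ℕ) (M : Fin m → Fin n → Bool) :
    Fv c a (fun q p => M p q) = Fv a c M := by
  unfold Fv
  rw [add_comm]
  congr 1

lemma suff (a b : Fin m → ℕ) (c d : Fin n → ℕ)
    (hab : ∀ i, a i ≤ b i) (hcd : ∀ j, c j ≤ d j)
    (hR : ∀ S : Finset (Fin m), ∑ i ∈ S, a i ≤ ∑ j, min (d j) S.card)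
    (hC : ∀ T : Finset (Fin n), ∑ j ∈ T, c j ≤ ∑ i, min (b i) T.card) :
    ∃ M : Fin m → Fin n → Bool,
      (∀ i, a i ≤ rs M i ∧ rs M i ≤ b i) ∧ (∀ j, c j ≤ cs M j ∧ cs M j ≤ d j) := by
  classical
  set s : Finset (Fin m → Fin n → Bool) :=
    univ.filter (fun M => (∀ i, rs M i ≤ b i) ∧ (∀ j, cs M j ≤ d j)) with hs
  have hne : s.Nonempty := by
    refine ⟨fun _ _ => false, ?_⟩
    rw [hs]
    refine mem_filter.mpr ⟨mem_univ _, ⟨fun i => ?_, fun j => ?_⟩⟩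
    · simp [rs]
    · simp [cs]
  obtain ⟨M0, hM0s, hmaxs⟩ := s.exists_max_image (Fv a c) hne
  obtain ⟨-, hfb, hfd⟩ : _ ∧ (∀ i, rs M0 i ≤ b i) ∧ (∀ j, cs M0 j ≤ d j) := by
    have := mem_filter.mp (hs ▸ hM0s)
    exact ⟨trivial, this.2.1, this.2.2⟩
  have hmax : ∀ M, (∀ i, rs M i ≤ b i) → (∀ j, cs M j ≤ d j) → Fv a c M ≤ Fv a c M0 := by
    intro M h1 h2
    exact hmaxs M (by rw [hs]; exact mem_filter.mpr ⟨mem_univ _, h1, h2⟩)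
  have hrows : ∀ i, a i ≤ rs M0 i := by
    intro i
    by_contra hlt
    obtain ⟨S, hS⟩ := key a b c d M0 i hfb hfd hmax (not_le.mp hlt) (hab i)
    exact absurd (hR S) (not_le.mpr hS)
  have hcols : ∀ j, c j ≤ cs M0 j := by
    intro j
    by_contra hlt
    have hmax' : ∀ M' : Fin n → Fin m → Bool,
        (∀ q, rs M' q ≤ d q) → (∀ p, cs M' p ≤ b p) →
        Fv c a M' ≤ Fv c a (fun q p => M0 p q) := by
      intro M' h1 h2
      have h3 := hmax (fun p q => M' q p) (fun p => h2 p) (fun q => h1 q)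
      calc Fv c a M' = Fv a c (fun p q => M' q p) := (Fv_transpose c a M').symm
        _ ≤ Fv a c M0 := h3
        _ = Fv c a (fun q p => M0 p q) := (Fv_transpose a c M0).symm
    obtain ⟨T, hT⟩ := key c d a b (fun q p => M0 p q) j
      (fun q => by rw [rs_transpose]; exact hfd q)
      (fun p => by rw [cs_transpose]; exact hfb p)
      hmax'
      (by rw [rs_transpose]; exact not_le.mp hlt) (hcd j)
    exact absurd (hC T) (not_le.mpr hT)
  exact ⟨M0, fun i => ⟨hrows i, hfb i⟩, fun j => ⟨hcols j, hfd j⟩⟩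


lemma strictMono_le {t : ℕ} (f : Fin t → Fin n) (hf : StrictMono f) :
    ∀ k : Fin t, (k : ℕ) ≤ (f k : ℕ) := by
  have H : ∀ v : ℕ, ∀ h : v < t, v ≤ (f ⟨v, h⟩ : ℕ) := by
    intro v
    induction v with
    | zero => intro h; exact Nat.zero_le _
    | succ v ih =>
        intro h
        have hv : v < t := Nat.lt_of_succ_lt h
        have h1 : f ⟨v, hv⟩ < f ⟨v + 1, h⟩ := hf (by simp [Fin.lt_def])
        have h2 := ih hv
        have := Fin.lt_def.mp h1
        omega
  intro k
  have := H k.1 k.2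
  simpa using this

lemma sum_le_prefix (c : Fin n → ℕ) (hc : Antitone c) (T : Finset (Fin n)) :
    ∑ j ∈ T, c j ≤ ∑ i : Fin n, if (i : ℕ) < T.card then c i else 0 := by
  classical
  set t := T.card with ht
  have htn : t ≤ n := by
    rw [ht]; simpa using Finset.card_le_univ T
  have hL : ∑ j ∈ T, c j = ∑ k : Fin t, c (T.orderEmbOfFin ht.symm k) := by
    rw [← Finset.sum_coe_sort T c]
    exact (Fintype.sum_equiv (T.orderIsoOfFin ht.symm).toEquiv
      (fun k => c (T.orderEmbOfFin ht.symm k)) (fun x => c x)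
      (fun k => by simp [Finset.coe_orderIsoOfFin_apply])).symm
  have step1 : ∑ k : Fin t, c (T.orderEmbOfFin ht.symm k)
      ≤ ∑ k : Fin t, c (Fin.castLE htn k) := by
    apply Finset.sum_le_sum
    intro k _
    apply hc
    rw [Fin.le_def]
    exact strictMono_le _ (T.orderEmbOfFin ht.symm).strictMono k
  have step2 : ∑ k : Fin t, c (Fin.castLE htn k)
      ≤ ∑ i : Fin n, if (i : ℕ) < t then c i else 0 := by
    rw [← Finset.sum_filter]
    have himg : ∑ k : Fin t, c (Fin.castLE htn k)
        = ∑ i ∈ Finset.image (Fin.castLE htn) univ, c i := by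
      rw [Finset.sum_image]
      intro x _ y _ hxy
      exact Fin.castLE_injective htn hxy
    rw [himg]
    apply Finset.sum_le_sum_of_subset
    intro x hx
    simp only [Finset.mem_image] at hx
    obtain ⟨k, _, rfl⟩ := hx
    simp only [Finset.mem_filter, Finset.mem_univ, true_and]
    exact k.2
  rw [hL]
  exact le_trans step1 step2


lemma nec (b : Fin m → ℕ) (c : Fin n → ℕ) (M : Fin m → Fin n → Bool)
    (hb : ∀ i, rs M i ≤ b i) (hc : ∀ j, c j ≤ cs M j) (t : ℕ) :
    (∑ i : Fin n, if (i : ℕ) < t then c i else 0) ≤ ∑ j : Fin m, min (b j) t := by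
  classical
  have s1 : (∑ i : Fin n, if (i : ℕ) < t then c i else 0)
      ≤ ∑ i : Fin n, if (i : ℕ) < t then cs M i else 0 := by
    apply Finset.sum_le_sum
    intro i _
    split
    · exact hc i
    · exact le_rfl
  have s2 : (∑ i : Fin n, if (i : ℕ) < t then cs M i else 0)
      = ∑ p : Fin m, ∑ i : Fin n, if (i : ℕ) < t then (if M p i then 1 else 0) else 0 := by
    rw [Finset.sum_comm]
    apply Finset.sum_congr rfl
    intro i _
    unfold cs
    split
    · rfl
    · exact Finset.sum_const_zero.symm
  have s3 : ∀ p : Fin m,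
      (∑ i : Fin n, if (i : ℕ) < t then (if M p i then (1:ℕ) else 0) else 0)
      ≤ min (b p) t := by
    intro p
    apply le_min
    · refine le_trans (Finset.sum_le_sum fun i _ => ?_) (hb p)
      split
      · exact le_rfl
      · exact Nat.zero_le _
    · have h1 : (∑ i : Fin n, if (i : ℕ) < t then (if M p i then (1:ℕ) else 0) else 0)
          ≤ ∑ i : Fin n, if (i : ℕ) < t then 1 else 0 := by
        apply Finset.sum_le_sum
        intro i _
        split
        · split <;> omega
        · exact le_rfl
      refine le_trans h1 ?_
      rw [← Finset.card_filter]
      have : #(Finset.filter (fun i : Fin n => (i:ℕ) < t) univ) ≤ #(Finset.range t) := by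
        refine Finset.card_le_card_of_injOn Fin.val ?_ ?_
        · intro x hx
          simp only [Finset.mem_coe, Finset.mem_filter] at hx
          exact Finset.mem_range.mpr hx.2
        · intro x _ y _ h
          exact Fin.val_injective h
      simpa using this
  calc (∑ i : Fin n, if (i : ℕ) < t then c i else 0)
      ≤ ∑ i : Fin n, if (i : ℕ) < t then cs M i else 0 := s1
    _ = _ := s2
    _ ≤ ∑ p : Fin m, min (b p) t := Finset.sum_le_sum fun p _ => s3 p


end TGG

/-- Theorem of Tripathi, Garg and Goel. -/
theorem tripathi_garg_goel {m n : ℕ} (a b : Fin m → ℕ) (c d : Fin n → ℕ)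
    (ha : Antitone a) (hc : Antitone c)
    (hab : ∀ i, a i ≤ b i) (hcd : ∀ j, c j ≤ d j) :
    IntervalBigraphic a b c d ↔
      ((∀ t : ℕ, 1 ≤ t → t ≤ n →
          (∑ i : Fin n, if (i : ℕ) < t then c i else 0) ≤ ∑ j : Fin m, min (b j) t) ∧
       (∀ s : ℕ, 1 ≤ s → s ≤ m →
          (∑ i : Fin m, if (i : ℕ) < s then a i else 0) ≤ ∑ j : Fin n, min (d j) s)) := by
  constructor
  · rintro ⟨M, h1, h2⟩
    constructor
    · intro t _ _
      exact TGG.nec b c M (fun i => (h1 i).2) (fun j => (h2 j).1) t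
    · intro s _ _
      exact TGG.nec d a (fun q p => M p q) (fun q => (h2 q).2) (fun p => (h1 p).1) s
  · rintro ⟨h1, h2⟩
    have hR : ∀ S : Finset (Fin m), ∑ i ∈ S, a i ≤ ∑ j : Fin n, min (d j) S.card := by
      intro S
      rcases Nat.eq_zero_or_pos S.card with h0 | hpos
      · rw [Finset.card_eq_zero.mp h0]
        simp
      · have hSm : S.card ≤ m := by simpa using Finset.card_le_univ S
        exact le_trans (TGG.sum_le_prefix a ha S) (h2 S.card hpos hSm)
    have hC : ∀ T : Finset (Fin n), ∑ j ∈ T, c j ≤ ∑ i : Fin m, min (b i) T.card := by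
      intro T
      rcases Nat.eq_zero_or_pos T.card with h0 | hpos
      · rw [Finset.card_eq_zero.mp h0]
        simp
      · have hTn : T.card ≤ n := by simpa using Finset.card_le_univ T
        exact le_trans (TGG.sum_le_prefix c hc T) (h1 T.card hpos hTn)
    obtain ⟨M, hM1, hM2⟩ := TGG.suff a b c d hab hcd hR hC
    exact ⟨M, fun i => hM1 i, fun j => hM2 j⟩
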